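/- (Discrete Rellich inequality.) For every finitely supported function u : ℤ → ℂ with u(n) = 0 for all n ≤ 1, one has ∑_{n=1}^{∞} |2u(n) − u(n+1) − u(n−1)|² ≥ (1/2) · ∑_{n=1}^{∞} |u(n)|²/n⁴. -/

import Mathlib

open scoped BigOperators

lemma pt_ineq (x y : ℂ) (β : ℝ) (hβ : 0 < β) :
    ‖x - y‖ ^ 2 ≥ (1 - β) * ‖x‖ ^ 2 + (1 - 1 / β) * ‖y‖ ^ 2 := by
  have h1 : |‖x‖ - ‖y‖| ≤ ‖x - y‖ := abs_norm_sub_norm_le x y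
  have h2 : (‖x‖ - ‖y‖) ^ 2 ≤ ‖x - y‖ ^ 2 := by
    rw [← sq_abs]
    exact pow_le_pow_left₀ (abs_nonneg _) h1 2
  have h3 : 0 ≤ (1 / β) * (β * ‖x‖ - ‖y‖) ^ 2 := by positivity
  have h4 : (1 / β) * (β * ‖x‖ - ‖y‖) ^ 2
      = β * ‖x‖ ^ 2 - 2 * ‖x‖ * ‖y‖ + (1 / β) * ‖y‖ ^ 2 := by
    field_simp
    ring
  nlinarith [h2, h4 ▸ h3]

lemma ground_state (h : ℕ → ℂ) (w β V E : ℕ → ℝ)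
    (hE0 : E 0 * ‖h 0‖ ^ 2 = 0)
    (hpt : ∀ n, w n * ‖h (n + 1) - h n‖ ^ 2 ≥
      w n * (1 - β n) * ‖h (n + 1)‖ ^ 2 + w n * (1 - 1 / β n) * ‖h n‖ ^ 2)
    (hE : ∀ n, E (n + 1) = w n * (1 - β n))
    (hV : ∀ n, V n * ‖h n‖ ^ 2 ≤ E n * ‖h n‖ ^ 2 + w n * (1 - 1 / β n) * ‖h n‖ ^ 2) :
    ∀ N, ∑ n ∈ Finset.range N, w n * ‖h (n + 1) - h n‖ ^ 2 ≥
      (∑ m ∈ Finset.range N, V m * ‖h m‖ ^ 2) + E N * ‖h N‖ ^ 2 := by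
  intro N
  induction N with
  | zero =>
      simp only [Finset.range_zero, Finset.sum_empty, zero_add]
      linarith [hE0.le]
  | succ N ih =>
      rw [Finset.sum_range_succ, Finset.sum_range_succ, hE N]
      have h1 := hpt N
      have h2 := hV N
      linarith

lemma step1 (u : ℤ → ℂ) (h0 : ∀ n : ℤ, n ≤ 1 → u n = 0) (N : ℕ)
    (hN : ∀ m : ℤ, (N : ℤ) ≤ m → u m = 0) :
    ∑ n ∈ Finset.range N, ‖u ((n : ℤ) + 2) - 2 * u ((n : ℤ) + 1) + u (n : ℤ)‖ ^ 2 ≥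
      ∑ m ∈ Finset.range N,
        (1 / 4 : ℝ) * (1 / ((m : ℝ)) ^ 2) * ‖u ((m : ℤ) + 1) - u (m : ℤ)‖ ^ 2 := by
  set g : ℕ → ℂ := fun n => u ((n : ℤ) + 1) - u (n : ℤ) with hgdef
  have hg0 : g 0 = 0 := by
    simp only [hgdef, Nat.cast_zero, zero_add]
    rw [h0 0 (by norm_num), h0 1 le_rfl, sub_zero]
  have hE0 : 1 / (2 * ((0 : ℕ) : ℝ) - 1) * ‖g 0‖ ^ 2 = 0 := by simp [hg0]
  have hpt : ∀ n : ℕ, (1 : ℝ) * ‖g (n + 1) - g n‖ ^ 2 ≥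
      1 * (1 - 2 * (n : ℝ) / (2 * (n : ℝ) + 1)) * ‖g (n + 1)‖ ^ 2 +
      1 * (1 - 1 / (2 * (n : ℝ) / (2 * (n : ℝ) + 1))) * ‖g n‖ ^ 2 := by
    intro n
    rcases n with _ | m
    · simp [hg0]
    · simp only [one_mul]
      refine pt_ineq _ _ _ ?_
      push_cast
      positivity
  have hE : ∀ n : ℕ, 1 / (2 * ((n + 1 : ℕ) : ℝ) - 1) =
      (1 : ℝ) * (1 - 2 * (n : ℝ) / (2 * (n : ℝ) + 1)) := by
    intro n
    have hd : (2 * (n : ℝ) + 1) ≠ 0 := by positivity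
    push_cast
    rw [one_mul, eq_sub_iff_add_eq]
    have h2 : 2 * ((n : ℝ) + 1) - 1 = 2 * (n : ℝ) + 1 := by ring
    rw [h2, ← add_div, add_comm (1 : ℝ), div_self hd]
  have hV : ∀ n : ℕ, (1 / 4 : ℝ) * (1 / ((n : ℝ)) ^ 2) * ‖g n‖ ^ 2 ≤
      1 / (2 * (n : ℝ) - 1) * ‖g n‖ ^ 2 +
      (1 : ℝ) * (1 - 1 / (2 * (n : ℝ) / (2 * (n : ℝ) + 1))) * ‖g n‖ ^ 2 := by
    intro n
    rcases n with _ | m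
    · simp [hg0]
    · have hx : (0 : ℝ) ≤ ‖g (m + 1)‖ ^ 2 := by positivity
      have hm : (1 : ℝ) ≤ ((m + 1 : ℕ) : ℝ) := by
        push_cast; linarith [Nat.cast_nonneg (α := ℝ) m]
      set x : ℝ := ((m + 1 : ℕ) : ℝ) with hxdef
      have hx1 : (0 : ℝ) < 2 * x - 1 := by linarith
      have hx2 : (0 : ℝ) < 2 * x + 1 := by linarith
      have hx0 : (0 : ℝ) < x := by linarith
      have hc : (1 / 4 : ℝ) * (1 / x ^ 2) ≤
          1 / (2 * x - 1) + (1 : ℝ) * (1 - 1 / (2 * x / (2 * x + 1))) := by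
        have e : 1 / (2 * x - 1) + (1 : ℝ) * (1 - 1 / (2 * x / (2 * x + 1)))
            - (1 / 4 : ℝ) * (1 / x ^ 2) = 1 / (4 * x ^ 2 * (2 * x - 1)) := by
          field_simp
          ring
        nlinarith [one_div_pos.mpr (show (0:ℝ) < 4 * x ^ 2 * (2 * x - 1) by positivity)]
      nlinarith [mul_le_mul_of_nonneg_right hc hx]
  have key := ground_state g (fun _ => (1 : ℝ)) (fun n => 2 * (n : ℝ) / (2 * (n : ℝ) + 1))
      (fun n => (1 / 4 : ℝ) * (1 / ((n : ℝ)) ^ 2)) (fun n => 1 / (2 * (n : ℝ) - 1))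
      hE0 hpt hE hV N
  have hgN : g N = 0 := by
    simp only [hgdef]
    rw [hN _ le_rfl, hN _ (by linarith [le_refl (N : ℤ)] : (N : ℤ) ≤ (N : ℤ) + 1), sub_zero]
  have e1 : ∀ n ∈ Finset.range N, (1 : ℝ) * ‖g (n + 1) - g n‖ ^ 2 =
      ‖u ((n : ℤ) + 2) - 2 * u ((n : ℤ) + 1) + u (n : ℤ)‖ ^ 2 := by
    intro n _
    rw [one_mul]
    have hgn : g (n + 1) - g n = u ((n : ℤ) + 2) - 2 * u ((n : ℤ) + 1) + u (n : ℤ) := by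
      simp only [hgdef]
      push_cast
      ring_nf
    rw [hgn]
  calc ∑ n ∈ Finset.range N, ‖u ((n : ℤ) + 2) - 2 * u ((n : ℤ) + 1) + u (n : ℤ)‖ ^ 2
      = ∑ n ∈ Finset.range N, (1 : ℝ) * ‖g (n + 1) - g n‖ ^ 2 :=
        (Finset.sum_congr rfl e1).symm
    _ ≥ (∑ m ∈ Finset.range N, (1 / 4 : ℝ) * (1 / ((m : ℝ)) ^ 2) * ‖g m‖ ^ 2)
          + 1 / (2 * (N : ℝ) - 1) * ‖g N‖ ^ 2 := key
    _ = ∑ m ∈ Finset.range N, (1 / 4 : ℝ) * (1 / ((m : ℝ)) ^ 2) * ‖u ((m : ℤ) + 1) - u (m : ℤ)‖ ^ 2 := by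
        rw [hgN]
        simp [hgdef]

lemma step2 (u : ℤ → ℂ) (h0 : ∀ n : ℤ, n ≤ 1 → u n = 0) (N : ℕ)
    (hN : ∀ m : ℤ, (N : ℤ) ≤ m → u m = 0) :
    ∑ n ∈ Finset.range N, (1 / ((n : ℝ)) ^ 2) * ‖u ((n : ℤ) + 1) - u (n : ℤ)‖ ^ 2 ≥
      ∑ m ∈ Finset.range N, (2 / ((m : ℝ)) ^ 4) * ‖u (m : ℤ)‖ ^ 2 := by
  set f : ℕ → ℂ := fun n => u (n : ℤ) with hfdef
  have hf0 : f 0 = 0 := by simp only [hfdef, Nat.cast_zero]; exact h0 0 (by norm_num)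
  have hf1 : f 1 = 0 := by simp only [hfdef, Nat.cast_one]; exact h0 1 le_rfl
  have hE0 : (2 * ((0 : ℕ) : ℝ) - 1) / ((((0 : ℕ) : ℝ) - 1) ^ 2 * ((0 : ℕ) : ℝ) ^ 2)
      * ‖f 0‖ ^ 2 = 0 := by simp [hf0]
  have hpt : ∀ n : ℕ, (1 / ((n : ℝ)) ^ 2) * ‖f (n + 1) - f n‖ ^ 2 ≥
      (1 / ((n : ℝ)) ^ 2) * (1 - ((n : ℝ)) ^ 2 / (((n : ℝ)) + 1) ^ 2) * ‖f (n + 1)‖ ^ 2 +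
      (1 / ((n : ℝ)) ^ 2) * (1 - 1 / (((n : ℝ)) ^ 2 / (((n : ℝ)) + 1) ^ 2)) * ‖f n‖ ^ 2 := by
    intro n
    rcases n with _ | m
    · norm_num
    · have hβ : (0 : ℝ) < (((m + 1 : ℕ) : ℝ)) ^ 2 / ((((m + 1 : ℕ) : ℝ)) + 1) ^ 2 := by
        push_cast; positivity
      have hw : (0 : ℝ) ≤ 1 / (((m + 1 : ℕ) : ℝ)) ^ 2 := by positivity
      have hp := pt_ineq (f (m + 2)) (f (m + 1)) _ hβ
      nlinarith [mul_le_mul_of_nonneg_left hp hw]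
  have hE : ∀ n : ℕ, (2 * ((n + 1 : ℕ) : ℝ) - 1) / ((((n + 1 : ℕ) : ℝ) - 1) ^ 2 * ((n + 1 : ℕ) : ℝ) ^ 2)
      = (1 / ((n : ℝ)) ^ 2) * (1 - ((n : ℝ)) ^ 2 / (((n : ℝ)) + 1) ^ 2) := by
    intro n
    rcases n with _ | m
    · norm_num
    · have h1 : (((m + 1 : ℕ) : ℝ)) ≠ 0 := by push_cast; positivity
      have h2 : (((m + 1 : ℕ) : ℝ) + 1) ≠ 0 := by push_cast; positivity
      push_cast
      field_simp
      ring
  have hV : ∀ n : ℕ, (2 / ((n : ℝ)) ^ 4) * ‖f n‖ ^ 2 ≤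
      (2 * ((n : ℝ)) - 1) / ((((n : ℝ)) - 1) ^ 2 * ((n : ℝ)) ^ 2) * ‖f n‖ ^ 2 +
      (1 / ((n : ℝ)) ^ 2) * (1 - 1 / (((n : ℝ)) ^ 2 / (((n : ℝ)) + 1) ^ 2)) * ‖f n‖ ^ 2 := by
    intro n
    match n with
    | 0 => norm_num
    | 1 => rw [hf1]; norm_num
    | (m + 2) =>
      have hx : (0 : ℝ) ≤ ‖f (m + 2)‖ ^ 2 := by positivity
      have hm : (2 : ℝ) ≤ ((m + 2 : ℕ) : ℝ) := by
        push_cast; linarith [Nat.cast_nonneg (α := ℝ) m]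
      set x : ℝ := ((m + 2 : ℕ) : ℝ) with hxdef
      have h1 : (0:ℝ) < x - 1 := by linarith
      have h0x : (0:ℝ) < x := by linarith
      have hc : 2 / x ^ 4 ≤ (2 * x - 1) / ((x - 1) ^ 2 * x ^ 2)
          + 1 / x ^ 2 * (1 - 1 / (x ^ 2 / (x + 1) ^ 2)) := by
        have e : (2 * x - 1) / ((x - 1) ^ 2 * x ^ 2) + 1 / x ^ 2 * (1 - 1 / (x ^ 2 / (x + 1) ^ 2))
            - 2 / x ^ 4 = (4 * x - 3) / ((x - 1) ^ 2 * x ^ 4) := by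
          field_simp
          ring
        nlinarith [div_pos (show (0:ℝ) < 4 * x - 3 by linarith)
          (show (0:ℝ) < (x - 1) ^ 2 * x ^ 4 by positivity)]
      nlinarith [mul_le_mul_of_nonneg_right hc hx]
  have key := ground_state f (fun n => 1 / ((n : ℝ)) ^ 2)
      (fun n => ((n : ℝ)) ^ 2 / (((n : ℝ)) + 1) ^ 2)
      (fun n => 2 / ((n : ℝ)) ^ 4)
      (fun n => (2 * ((n : ℝ)) - 1) / ((((n : ℝ)) - 1) ^ 2 * ((n : ℝ)) ^ 2))
      hE0 hpt hE hV N
  have hfN : f N = 0 := by simp only [hfdef]; exact hN _ le_rfl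
  have e1 : ∀ n ∈ Finset.range N, (1 / ((n : ℝ)) ^ 2) * ‖f (n + 1) - f n‖ ^ 2 =
      (1 / ((n : ℝ)) ^ 2) * ‖u ((n : ℤ) + 1) - u (n : ℤ)‖ ^ 2 := by
    intro n _
    have hfn : f (n + 1) - f n = u ((n : ℤ) + 1) - u (n : ℤ) := by
      simp only [hfdef]
      push_cast
      ring
    rw [hfn]
  calc ∑ n ∈ Finset.range N, (1 / ((n : ℝ)) ^ 2) * ‖u ((n : ℤ) + 1) - u (n : ℤ)‖ ^ 2
      = ∑ n ∈ Finset.range N, (1 / ((n : ℝ)) ^ 2) * ‖f (n + 1) - f n‖ ^ 2 :=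
        (Finset.sum_congr rfl e1).symm
    _ ≥ (∑ m ∈ Finset.range N, (2 / ((m : ℝ)) ^ 4) * ‖f m‖ ^ 2)
          + (2 * ((N : ℝ)) - 1) / ((((N : ℝ)) - 1) ^ 2 * ((N : ℝ)) ^ 2) * ‖f N‖ ^ 2 := key
    _ = ∑ m ∈ Finset.range N, (2 / ((m : ℝ)) ^ 4) * ‖u (m : ℤ)‖ ^ 2 := by
        rw [hfN]
        simp [hfdef]

theorem discrete_rellich
    (u : ℤ → ℂ) (hu : (Function.support u).Finite)
    (h0 : ∀ n : ℤ, n ≤ 1 → u n = 0) :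
    ∑' n : ℕ, ‖2 * u ((n : ℤ) + 1) - u ((n : ℤ) + 2) - u (n : ℤ)‖ ^ 2 ≥
      (1 / 2 : ℝ) * ∑' n : ℕ, ‖u ((n : ℤ) + 1)‖ ^ 2 / ((n : ℝ) + 1) ^ 4 := by
  obtain ⟨B, hB⟩ := hu.bddAbove
  set N : ℕ := B.toNat + 1 with hNdef
  have hbig : ∀ m : ℤ, (N : ℤ) ≤ m → u m = 0 := by
    intro m hm
    by_contra hme
    have h1 : m ≤ B := hB (Function.mem_support.mpr hme)
    have h2 : B ≤ (B.toNat : ℤ) := Int.self_le_toNat B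
    have h3 : ((N : ℕ) : ℤ) = (B.toNat : ℤ) + 1 := by rw [hNdef]; push_cast; ring
    omega
  -- convert LHS tsum to a finite sum
  have hL : (∑' n : ℕ, ‖2 * u ((n : ℤ) + 1) - u ((n : ℤ) + 2) - u (n : ℤ)‖ ^ 2)
      = ∑ n ∈ Finset.range N, ‖u ((n : ℤ) + 2) - 2 * u ((n : ℤ) + 1) + u (n : ℤ)‖ ^ 2 := by
    have hfun : (fun n : ℕ => ‖2 * u ((n : ℤ) + 1) - u ((n : ℤ) + 2) - u (n : ℤ)‖ ^ 2)
        = fun n : ℕ => ‖u ((n : ℤ) + 2) - 2 * u ((n : ℤ) + 1) + u (n : ℤ)‖ ^ 2 := by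
      funext n
      rw [← norm_neg]
      congr 2
      ring
    rw [hfun]
    refine tsum_eq_sum ?_
    intro n hn
    have hn' : N ≤ n := by simpa using hn
    rw [hbig ((n : ℤ) + 2) (by push_cast; omega), hbig ((n : ℤ) + 1) (by push_cast; omega),
      hbig (n : ℤ) (by push_cast; omega)]
    simp
  -- convert RHS tsum to a finite sum
  have hR : (∑' n : ℕ, ‖u ((n : ℤ) + 1)‖ ^ 2 / ((n : ℝ) + 1) ^ 4)
      = ∑ n ∈ Finset.range N, ‖u ((n : ℤ) + 1)‖ ^ 2 / ((n : ℝ) + 1) ^ 4 := by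
    refine tsum_eq_sum ?_
    intro n hn
    have hn' : N ≤ n := by simpa using hn
    rw [hbig ((n : ℤ) + 1) (by push_cast; omega)]
    simp
  -- index shift on the RHS
  have hv1 : ‖u ((N : ℕ) : ℤ)‖ ^ 2 / (((N : ℕ) : ℝ)) ^ 4 = 0 := by
    rw [hbig _ le_rfl]; simp
  have hv2 : ‖u ((0 : ℕ) : ℤ)‖ ^ 2 / (((0 : ℕ) : ℝ)) ^ 4 = 0 := by
    rw [show ((0 : ℕ) : ℤ) = 0 from rfl, h0 0 (by norm_num)]; simp
  have e : ∀ n ∈ Finset.range N, ‖u ((n : ℤ) + 1)‖ ^ 2 / ((n : ℝ) + 1) ^ 4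
      = ‖u (((n + 1 : ℕ)) : ℤ)‖ ^ 2 / (((n + 1 : ℕ) : ℝ)) ^ 4 := by
    intro n _
    push_cast
    ring
  have key : ∑ m ∈ Finset.range (N + 1), ‖u (m : ℤ)‖ ^ 2 / ((m : ℝ)) ^ 4
      = (∑ n ∈ Finset.range N, ‖u (((n + 1 : ℕ)) : ℤ)‖ ^ 2 / (((n + 1 : ℕ) : ℝ)) ^ 4)
        + ‖u ((0 : ℕ) : ℤ)‖ ^ 2 / (((0 : ℕ) : ℝ)) ^ 4 :=
    Finset.sum_range_succ' _ N
  have key2 : ∑ m ∈ Finset.range (N + 1), ‖u (m : ℤ)‖ ^ 2 / ((m : ℝ)) ^ 4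
      = (∑ m ∈ Finset.range N, ‖u (m : ℤ)‖ ^ 2 / ((m : ℝ)) ^ 4)
        + ‖u ((N : ℕ) : ℤ)‖ ^ 2 / (((N : ℕ) : ℝ)) ^ 4 :=
    Finset.sum_range_succ _ N
  have hshift : ∑ n ∈ Finset.range N, ‖u ((n : ℤ) + 1)‖ ^ 2 / ((n : ℝ) + 1) ^ 4
      = ∑ m ∈ Finset.range N, ‖u (m : ℤ)‖ ^ 2 / ((m : ℝ)) ^ 4 := by
    rw [Finset.sum_congr rfl e]
    linarith [key, key2, hv1, hv2]
  rw [hL, hR, hshift]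
  have k1 := step1 u h0 N hbig
  have k2 := step2 u h0 N hbig
  have hsum : ∑ m ∈ Finset.range N,
        (1 / 4 : ℝ) * (1 / ((m : ℝ)) ^ 2) * ‖u ((m : ℤ) + 1) - u (m : ℤ)‖ ^ 2
      = (1 / 4 : ℝ) * ∑ m ∈ Finset.range N,
        (1 / ((m : ℝ)) ^ 2) * ‖u ((m : ℤ) + 1) - u (m : ℤ)‖ ^ 2 := by
    rw [Finset.mul_sum]
    exact Finset.sum_congr rfl fun m _ => by ring
  have hS3 : ∑ m ∈ Finset.range N, (2 / ((m : ℝ)) ^ 4) * ‖u (m : ℤ)‖ ^ 2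
      = 2 * ∑ m ∈ Finset.range N, ‖u (m : ℤ)‖ ^ 2 / ((m : ℝ)) ^ 4 := by
    rw [Finset.mul_sum]
    exact Finset.sum_congr rfl fun m _ => by ring
  linarith [k1, k2, hsum, hS3]
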